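/- Let τ > 0, ε ∈ (0,1), δ ∈ (0,1). Define H : [0,∞) → [0,∞) by H(x) = x for x ≤ τ(1-δ); H(x) = (1-δ)τ + δτ(x - (1-δ)τ)/(τ - x(1-ε) - (1-δ)ετ) for τ(1-δ) < x ≤ τ; H(x) = (x - (1 - ε(δ + ε - δε))τ)/ε² for x > τ. Define V : [0,∞) → [0,∞) by V(y) = y for y ≤ τ(1-δ); V(y) = -τ(y - y(1-δ)ε - (1-δ)²(1-ε)τ)/(τ - y(1-ε) - δ(2-ε)τ - ετ) for τ(1-δ) < y ≤ τ + δ(1/ε - 1)τ; V(y) = τ + ε(yε - δ(1-ε)τ - ετ) for y > τ + δ(1/ε - 1)τ. Then V(H(x)) = x for all x ≥ 0; i.e., V is the inverse of H. -/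

import Mathlib

/-- The piecewise total implied variance structure `V` of the pseudo-volatility-freeze example
is the inverse of the corresponding `H(x) = ∫₀ˣ f(z)⁻² dz`: `V(H(x)) = x` for all `x ≥ 0`. -/
theorem stmt_9 (τ ε δ : ℝ) (hτ : 0 < τ) (hε : ε ∈ Set.Ioo (0 : ℝ) 1) (hδ : δ ∈ Set.Ioo (0 : ℝ) 1)
    (H V : ℝ → ℝ)
    (hH : ∀ x, H x =
      if x ≤ τ * (1 - δ) then x
      else if x ≤ τ then
        (1 - δ) * τ + δ * τ * (x - (1 - δ) * τ) / (τ - x * (1 - ε) - (1 - δ) * ε * τ)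
      else (x - (1 - ε * (δ + ε - δ * ε)) * τ) / ε ^ 2)
    (hV : ∀ y, V y =
      if y ≤ τ * (1 - δ) then y
      else if y ≤ τ + δ * (1 / ε - 1) * τ then
        -(τ * (y - y * (1 - δ) * ε - (1 - δ) ^ 2 * (1 - ε) * τ)) /
          (τ - y * (1 - ε) - δ * (2 - ε) * τ - ε * τ)
      else τ + ε * (y * ε - δ * (1 - ε) * τ - ε * τ)) :
    ∀ x : ℝ, 0 ≤ x → V (H x) = x := by
  obtain ⟨hε0, hε1⟩ := hε
  obtain ⟨hδ0, hδ1⟩ := hδ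
  intro x hx
  rcases le_or_gt x (τ * (1 - δ)) with h1 | h1
  · rw [hH, if_pos h1, hV, if_pos h1]
  · rcases le_or_gt x τ with h2 | h2
    · -- middle case
      have hD : 0 < τ - x * (1 - ε) - (1 - δ) * ε * τ := by nlinarith
      rw [hH, if_neg (not_le.mpr h1), if_pos h2]
      set y := (1 - δ) * τ + δ * τ * (x - (1 - δ) * τ) / (τ - x * (1 - ε) - (1 - δ) * ε * τ)
        with hy
      have hpos : 0 < δ * τ * (x - (1 - δ) * τ) / (τ - x * (1 - ε) - (1 - δ) * ε * τ) := by
        apply div_pos (by nlinarith) hD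
      have hy1 : ¬ y ≤ τ * (1 - δ) := by
        push_neg; rw [hy]; nlinarith
      have hy2 : y ≤ τ + δ * (1 / ε - 1) * τ := by
        have h := (div_le_iff₀ hD).mpr
          (show δ * τ * (x - (1 - δ) * τ) ≤ δ * τ / ε * (τ - x * (1 - ε) - (1 - δ) * ε * τ) by
            rw [div_mul_eq_mul_div, le_div_iff₀ hε0]; nlinarith)
        have hτε : (1 - δ) * τ + δ * τ / ε = τ + δ * (1 / ε - 1) * τ := by
          field_simp; ring
        rw [hy]; linarith
      have hy1' : τ * (1 - δ) < y := not_le.mp hy1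
      have hE : τ - y * (1 - ε) - δ * (2 - ε) * τ - ε * τ < 0 := by nlinarith
      rw [hV, if_neg hy1, if_pos hy2, div_eq_iff (ne_of_lt hE), hy]
      have hD' := hD.ne'
      generalize hDd : τ - x * (1 - ε) - (1 - δ) * ε * τ = D at *
      field_simp
      subst hDd
      ring
    · -- outer case
      have hne : ¬ x ≤ τ * (1 - δ) := by push_neg; nlinarith
      rw [hH, if_neg hne, if_neg (not_le.mpr h2)]
      set y := (x - (1 - ε * (δ + ε - δ * ε)) * τ) / ε ^ 2 with hy
      have hyt : τ + δ * (1 / ε - 1) * τ < y := by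
        rw [hy, lt_div_iff₀ (by positivity : (0:ℝ) < ε ^ 2)]
        have : (τ + δ * (1 / ε - 1) * τ) * ε ^ 2 = ε ^ 2 * τ + δ * ε * (1 - ε) * τ := by
          field_simp
        rw [this]; nlinarith
      have h1ε : 1 < 1 / ε := one_lt_one_div hε0 hε1
      have hpos2 : 0 < δ * (1 / ε - 1) * τ := mul_pos (mul_pos hδ0 (by linarith)) hτ
      have hy1 : ¬ y ≤ τ * (1 - δ) := by push_neg; nlinarith [hyt, hpos2]
      have hy2 : ¬ y ≤ τ + δ * (1 / ε - 1) * τ := not_le.mpr hyt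
      rw [hV, if_neg hy1, if_neg hy2, hy]
      field_simp
      ring
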